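/- For θ ∈ (0, π), the Poisson kernel on the strip P_θ(τ) = (1/2π)·sin θ/(cosh τ − cos θ) satisfies ∫_ℝ P_θ(τ) dτ = (π − θ)/π. -/

import Mathlib

open Real MeasureTheory Filter Topology

lemma tanh_tendsto : Tendsto (fun x : ℝ => Real.sinh x / Real.cosh x) atTop (𝓝 1) := by
  have heq : ∀ x : ℝ, Real.sinh x / Real.cosh x = (1 - Real.exp (-x)^2) / (1 + Real.exp (-x)^2) := by
    intro x
    have hab : Real.exp x * Real.exp (-x) = 1 := by
      rw [← Real.exp_add]; simp
    have hb : Real.exp (-x) ≠ 0 := (Real.exp_pos _).ne'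
    have h1 : 1 - Real.exp (-x)^2 = Real.exp (-x) * (Real.sinh x * 2) := by
      rw [Real.sinh_eq]; linear_combination -hab
    have h2 : 1 + Real.exp (-x)^2 = Real.exp (-x) * (Real.cosh x * 2) := by
      rw [Real.cosh_eq]; linear_combination -hab
    rw [h1, h2, mul_div_mul_left _ _ hb, mul_div_mul_right _ _ (two_ne_zero)]
  simp_rw [heq]
  have h0 : Tendsto (fun x : ℝ => Real.exp (-x)^2) atTop (𝓝 0) := by
    simpa using (Real.tendsto_exp_neg_atTop_nhds_zero.pow 2)
  have h1 : Tendsto (fun x : ℝ => 1 - Real.exp (-x)^2) atTop (𝓝 1) := by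
    simpa using tendsto_const_nhds.sub h0
  have h2 : Tendsto (fun x : ℝ => 1 + Real.exp (-x)^2) atTop (𝓝 1) := by
    simpa using tendsto_const_nhds.add h0
  have h3 := h1.div h2 one_ne_zero; rw [div_one] at h3; exact h3

theorem stmt_6 (θ : ℝ) (hθ : θ ∈ Set.Ioo 0 π) :
    ∫ τ : ℝ, (1/(2*π)) * Real.sin θ / (Real.cosh τ - Real.cos θ) = (π - θ)/π := by
  obtain ⟨hθ0, hθπ⟩ := hθ
  have hs : 0 < Real.sin (θ/2) := Real.sin_pos_of_pos_of_lt_pi (by linarith) (by linarith [Real.pi_pos])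
  have hc : 0 < Real.cos (θ/2) := Real.cos_pos_of_mem_Ioo ⟨by linarith [Real.pi_pos], by linarith⟩
  set s := Real.sin (θ/2) with hs'
  set c := Real.cos (θ/2) with hc'
  have hsinθ : Real.sin θ = 2 * s * c := by
    have h := Real.sin_two_mul (θ/2)
    rw [show 2*(θ/2) = θ by ring] at h
    rw [hs', hc', h]
  have hcosθ : Real.cos θ = 1 - 2 * s^2 := by
    have h := Real.cos_two_mul' (θ/2)
    rw [show 2*(θ/2) = θ by ring] at h
    have h2 := Real.sin_sq_add_cos_sq (θ/2)
    show Real.cos θ = 1 - 2 * Real.sin (θ/2)^2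
    linarith [h, h2]
  -- the antiderivative
  set F : ℝ → ℝ := fun x => (1/π) * Real.arctan ((c/s) * (Real.sinh (x/2) / Real.cosh (x/2))) with hF
  set g : ℝ → ℝ := fun τ => (1/(2*π)) * Real.sin θ / (Real.cosh τ - Real.cos θ) with hg
  have hπ : (0:ℝ) < π := Real.pi_pos
  have hderiv : ∀ x : ℝ, HasDerivAt F (g x) x := by
    intro x
    have hC : 0 < Real.cosh (x/2) := Real.cosh_pos _
    have hhalf : HasDerivAt (fun y : ℝ => y/2) (1/2) x := by
      simpa using (hasDerivAt_id x).div_const 2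
    have hsinh : HasDerivAt (fun y : ℝ => Real.sinh (y/2)) (Real.cosh (x/2) * (1/2)) x :=
      (Real.hasDerivAt_sinh _).comp x hhalf
    have hcosh : HasDerivAt (fun y : ℝ => Real.cosh (y/2)) (Real.sinh (x/2) * (1/2)) x :=
      (Real.hasDerivAt_cosh _).comp x hhalf
    have hdiv : HasDerivAt (fun y : ℝ => Real.sinh (y/2) / Real.cosh (y/2))
        ((Real.cosh (x/2) * (1/2) * Real.cosh (x/2) - Real.sinh (x/2) * (Real.sinh (x/2) * (1/2))) / (Real.cosh (x/2))^2) x :=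
      hsinh.div hcosh hC.ne'
    have hmul := hdiv.const_mul (c/s)
    have harctan := (Real.hasDerivAt_arctan ((c/s) * (Real.sinh (x/2) / Real.cosh (x/2)))).comp x hmul
    have hfinal := harctan.const_mul (1/π)
    convert hfinal using 1
    rotate_left 3
    have hid : Real.cosh (x/2)^2 - Real.sinh (x/2)^2 = 1 := Real.cosh_sq_sub_sinh_sq _
    have hcoshx : Real.cosh x = Real.cosh (x/2)^2 + Real.sinh (x/2)^2 := by
      rw [show x = 2 * (x/2) by ring, Real.cosh_two_mul]; ring_nf
    have hden : Real.cosh x - Real.cos θ > 0 := by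
      rw [hcosθ]; nlinarith [Real.one_le_cosh x, hs]
    have hpyth : s^2 + c^2 = 1 := Real.sin_sq_add_cos_sq (θ/2)
    have h1p : 0 < 1 + ((c/s) * (Real.sinh (x/2) / Real.cosh (x/2)))^2 := by positivity
    show g x = _
    rw [hg, hsinθ, hcosθ]
    simp only []
    rw [hcoshx]
    have hden2 : Real.cosh (x/2)^2 + Real.sinh (x/2)^2 - (1 - 2*s^2) ≠ 0 := by
      nlinarith [hid, hs]
    field_simp
    linear_combination (2*Real.sinh (x/2)^2) * hpyth
      - (Real.cosh (x/2)^2 + Real.sinh (x/2)^2) * hid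
    all_goals rfl
  have hsinpos : 0 < Real.sin θ := Real.sin_pos_of_pos_of_lt_pi hθ0 hθπ
  have hgpos : ∀ x : ℝ, 0 ≤ g x := by
    intro x
    have hden : 0 < Real.cosh x - Real.cos θ := by
      rw [hcosθ]; nlinarith [Real.one_le_cosh x, hs]
    rw [hg]
    positivity
  -- limit of F at top
  have harc : Real.arctan (c/s) = π/2 - θ/2 := by
    rw [hs', hc', ← inv_div, ← Real.tan_eq_sin_div_cos, ← Real.tan_pi_div_two_sub]
    exact Real.arctan_tan (by linarith) (by linarith [Real.pi_pos])
  have hFtop : Tendsto F atTop (𝓝 ((π - θ)/(2*π))) := by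
    have h2 : Tendsto (fun x : ℝ => x/2) atTop atTop :=
      Filter.tendsto_id.atTop_div_const two_pos
    have htt : Tendsto (fun x : ℝ => Real.sinh (x/2) / Real.cosh (x/2)) atTop (𝓝 1) :=
      tanh_tendsto.comp h2
    have hmul : Tendsto (fun x : ℝ => (c/s) * (Real.sinh (x/2) / Real.cosh (x/2))) atTop (𝓝 (c/s)) := by
      simpa using htt.const_mul (c/s)
    have harct : Tendsto (fun x : ℝ => Real.arctan ((c/s) * (Real.sinh (x/2) / Real.cosh (x/2)))) atTop
        (𝓝 (Real.arctan (c/s))) :=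
      (Real.continuous_arctan.tendsto _).comp hmul
    have := harct.const_mul (1/π)
    rw [harc] at this
    have heq : (1:ℝ)/π*(π/2-θ/2) = (π-θ)/(2*π) := by
      field_simp
    rw [← heq]
    exact this
  have hF0 : F 0 = 0 := by
    rw [hF]; simp
  -- integral over Ioi 0
  have hIoi : ∫ x in Set.Ioi (0:ℝ), g x = (π - θ)/(2*π) - F 0 :=
    integral_Ioi_of_hasDerivAt_of_nonneg' (fun x _ => hderiv x) (fun x _ => hgpos x) hFtop
  -- use evenness
  have heven : ∀ x : ℝ, g |x| = g x := by
    intro x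
    rw [hg]
    simp [Real.cosh_abs]
  have h1 : ∫ τ : ℝ, g τ = 2 * ∫ τ in Set.Ioi (0:ℝ), g τ := by
    rw [← integral_comp_abs (f := g)]
    simp_rw [heven]
  show (∫ τ : ℝ, g τ) = _
  rw [h1, hIoi, hF0, sub_zero]
  field_simp
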